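/- The commuting graph of the semiring of 2 × 2 matrices over the tropical semiring 𝕋 has infinite diameter (equivalently, Γ(M_2(𝕋)) is disconnected). -/

import Mathlib

/-- The commuting graph of the semiring of `n × n` matrices over `R`: vertices are the
noncentral matrices, and two distinct vertices are adjacent iff they commute. -/
def commGraph (R : Type*) [Semiring R] (n : ℕ) :
    SimpleGraph {X : Matrix (Fin n) (Fin n) R // ¬ ∀ Y, X * Y = Y * X} where
  Adj X Y := X ≠ Y ∧ X.1 * Y.1 = Y.1 * X.1
  symm := ⟨fun _ _ h => ⟨fun e => h.1 e.symm, h.2.symm⟩⟩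
  loopless := ⟨fun _ h => h.1 rfl⟩


/-- The max-plus tropical semiring `ℝ ∪ {-∞}`, realized as the `Tropical` semiring on the
order dual of `WithBot ℝ`. -/
noncomputable instance : LinearOrderedAddCommMonoidWithTop ((WithBot ℝ)ᵒᵈ) :=
  { (inferInstance : AddCommMonoid ((WithBot ℝ)ᵒᵈ)),
    (inferInstance : LinearOrder ((WithBot ℝ)ᵒᵈ)),
    (inferInstance : IsOrderedAddMonoid ((WithBot ℝ)ᵒᵈ)),
    (inferInstance : OrderTop ((WithBot ℝ)ᵒᵈ)) with
    top_add' := fun a => WithBot.bot_add a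
    isAddLeftRegular_of_ne_top := fun x hx _ _ h =>
      WithBot.add_left_cancel (α := ℝ) (x := OrderDual.ofDual x) hx h }

abbrev Trop : Type := Tropical ((WithBot ℝ)ᵒᵈ)

lemma trop_cancel {a b c : Trop} (hc : c ≠ 0) (h : a * c = b * c) : a = b := by
  apply Tropical.untrop_injective
  have h' := congrArg Tropical.untrop h
  rw [Tropical.untrop_mul, Tropical.untrop_mul] at h'
  have hc' : (OrderDual.ofDual (Tropical.untrop c)) ≠ (⊥ : WithBot ℝ) := by
    intro e
    exact hc (Tropical.untrop_injective (by simpa [Tropical.untrop_zero] using e))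
  exact WithBot.add_right_cancel hc' h'

/-- A tropical scalar matrix is central. -/
lemma scalar_central {X : Matrix (Fin 2) (Fin 2) Trop} (h01 : X 0 1 = 0)
    (h10 : X 1 0 = 0) (hd : X 0 0 = X 1 1) : ∀ Y, X * Y = Y * X := by
  intro Y
  ext i j
  fin_cases i <;> fin_cases j <;>
    simp [Matrix.mul_apply, Fin.sum_univ_two, h01, h10, ← hd] <;> ring

/-- Anything commuting with a noncentral diagonal matrix is diagonal. -/
lemma diag_closed {X Y : Matrix (Fin 2) (Fin 2) Trop} (h01 : X 0 1 = 0)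
    (h10 : X 1 0 = 0) (hne : X 0 0 ≠ X 1 1) (hc : X * Y = Y * X) :
    Y 0 1 = 0 ∧ Y 1 0 = 0 := by
  have e1 := congrFun (congrFun hc 0) 1
  have e2 := congrFun (congrFun hc 1) 0
  simp [Matrix.mul_apply, Fin.sum_univ_two, h01, h10] at e1 e2
  constructor
  · by_contra h
    exact hne (trop_cancel h (by rw [e1]; ring))
  · by_contra h
    exact hne (trop_cancel h (by rw [e2]; ring)).symm

noncomputable def tD : Matrix (Fin 2) (Fin 2) Trop :=
  !![1, 0; 0, Tropical.trop (OrderDual.toDual (37 : WithBot ℝ))]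

def tE : Matrix (Fin 2) (Fin 2) Trop := !![0, 1; 0, 0]

lemma t_ne_one : Tropical.trop (OrderDual.toDual (37 : WithBot ℝ)) ≠ 1 := by
  intro h
  have := congrArg Tropical.untrop h
  rw [Tropical.untrop_one] at this
  have : (37 : WithBot ℝ) = 0 := this
  norm_num at this

lemma DE_ne : tD * tE ≠ tE * tD := by
  intro h
  have e := congrFun (congrFun h 0) 1
  simp [tD, tE, Matrix.mul_apply, Fin.sum_univ_two] at e
  exact t_ne_one e.symm

lemma hD : ¬ ∀ Y, tD * Y = Y * tD := fun h => DE_ne (h tE)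

lemma hE : ¬ ∀ Y, tE * Y = Y * tE := fun h => DE_ne (h tD).symm

lemma walk_diag {u v : {X : Matrix (Fin 2) (Fin 2) Trop // ¬ ∀ Y, X * Y = Y * X}}
    (w : (commGraph Trop 2).Walk u v) (h : u.1 0 1 = 0 ∧ u.1 1 0 = 0) :
    v.1 0 1 = 0 ∧ v.1 1 0 = 0 := by
  induction w with
  | nil => exact h
  | @cons u x v a p ih =>
    refine ih ?_
    exact diag_closed h.1 h.2 (fun hd => u.2 (scalar_central h.1 h.2 hd)) a.2

/-- The commuting graph of `M_2(𝕋)` over the tropical semiring has infinite diameter. -/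
theorem diam_commGraph_M2_tropical : (commGraph Trop 2).ediam = ⊤ := by
  have hreach : ¬ (commGraph Trop 2).Reachable ⟨tD, hD⟩ ⟨tE, hE⟩ := by
    rintro ⟨w⟩
    have := walk_diag w (by constructor <;> simp [tD])
    have h1 : tE 0 1 = 0 := this.1
    simp [tE] at h1
    have := congrArg Tropical.untrop h1
    rw [Tropical.untrop_one, Tropical.untrop_zero] at this
    have h2 : (0 : WithBot ℝ) = ⊥ := this
    simp at h2
  rw [eq_top_iff, ← SimpleGraph.edist_eq_top_of_not_reachable hreach]
  exact SimpleGraph.edist_le_ediam
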